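/- If A and B are infinite totally ordered sets, then the lexicographic products A × ℤ and B × ℤ are isotypic as ordered sets. -/

import Mathlib

open FirstOrder Language

attribute [local instance] FirstOrder.Language.orderStructure

/-- Two structures are isotypic if every finite tuple in one of them has a
counterpart in the other realizing exactly the same first-order formulas,
and vice versa. -/
def Isotypic (L : FirstOrder.Language) (M N : Type*) [L.Structure M] [L.Structure N] : Prop :=
  (∀ (n : ℕ) (a : Fin n → M), ∃ b : Fin n → N,
      ∀ φ : L.Formula (Fin n), φ.Realize a ↔ φ.Realize b) ∧
  (∀ (n : ℕ) (b : Fin n → N), ∃ a : Fin n → M,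
      ∀ φ : L.Formula (Fin n), φ.Realize a ↔ φ.Realize b)

namespace IsotypicAux

variable {A B : Type*} [LinearOrder A] [LinearOrder B]

/-- Truncated signed distance on a lexicographic product with `ℤ`. -/
def trunc (r : ℕ) (x y : A ×ₗ ℤ) : ℤ :=
  if (ofLex x).1 = (ofLex y).1 then
    max (-(2 ^ r : ℤ)) (min ((2 : ℤ) ^ r) ((ofLex y).2 - (ofLex x).2))
  else if (ofLex x).1 < (ofLex y).1 then (2 : ℤ) ^ r else -(2 ^ r : ℤ)

lemma two_pow_pos (r : ℕ) : (0 : ℤ) < 2 ^ r := by positivity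

lemma trunc_self (r : ℕ) (x : A ×ₗ ℤ) : trunc r x x = 0 := by
  have := two_pow_pos r
  unfold trunc
  split_ifs with h1 h2
  · omega
  · exact absurd rfl h1
  · exact absurd rfl h1

lemma trunc_neg (r : ℕ) (x y : A ×ₗ ℤ) : trunc r y x = -trunc r x y := by
  have := two_pow_pos r
  rcases lt_trichotomy ((ofLex x).1) ((ofLex y).1) with h | h | h
  · rw [trunc, trunc, if_neg h.ne, if_neg h.ne', if_pos h, if_neg (not_lt_of_gt h)]
  · rw [trunc, trunc, if_pos h, if_pos h.symm]
    omega
  · rw [trunc, trunc, if_neg h.ne, if_neg h.ne', if_pos h, if_neg (not_lt_of_gt h)]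
    ring

lemma trunc_clamp {r s : ℕ} (h : r ≤ s) (x y : A ×ₗ ℤ) :
    trunc r x y = max (-(2 ^ r : ℤ)) (min ((2 : ℤ) ^ r) (trunc s x y)) := by
  have h1 := two_pow_pos r
  have h2 : (2 : ℤ) ^ r ≤ 2 ^ s := pow_le_pow_right₀ (by norm_num) h
  unfold trunc
  split_ifs with h3 h4 <;> omega

lemma trunc_eq_of_le {r s : ℕ} (h : r ≤ s) {x y : A ×ₗ ℤ} {x' y' : B ×ₗ ℤ}
    (heq : trunc s x y = trunc s x' y') : trunc r x y = trunc r x' y' := by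
  rw [trunc_clamp h, trunc_clamp h, heq]

lemma lex_le_iff (x y : A ×ₗ ℤ) :
    x ≤ y ↔ (ofLex x).1 < (ofLex y).1 ∨
      ((ofLex x).1 = (ofLex y).1 ∧ (ofLex x).2 ≤ (ofLex y).2) :=
  Prod.Lex.le_iff

lemma lex_ext_iff (x y : A ×ₗ ℤ) :
    x = y ↔ (ofLex x).1 = (ofLex y).1 ∧ (ofLex x).2 = (ofLex y).2 := by
  constructor
  · rintro rfl; exact ⟨rfl, rfl⟩
  · rintro ⟨h1, h2⟩
    exact ofLex.injective (Prod.ext h1 h2)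

lemma trunc_eq_zero_iff (r : ℕ) (x y : A ×ₗ ℤ) : trunc r x y = 0 ↔ x = y := by
  have h1 := two_pow_pos r
  rw [lex_ext_iff]
  unfold trunc
  split_ifs with h3 h4
  · constructor
    · intro h; exact ⟨h3, by omega⟩
    · intro h; omega
  · constructor
    · intro h; omega
    · intro h; exact absurd h.1 h3
  · constructor
    · intro h; omega
    · intro h; exact absurd h.1 h3

lemma trunc_nonneg_iff (r : ℕ) (x y : A ×ₗ ℤ) : 0 ≤ trunc r x y ↔ x ≤ y := by
  have h1 := two_pow_pos r
  rw [lex_le_iff]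
  unfold trunc
  split_ifs with h3 h4
  · constructor
    · intro h; right; exact ⟨h3, by omega⟩
    · rintro (h | h)
      · exact absurd h (le_of_eq h3.symm).not_gt
      · omega
  · constructor
    · intro _; exact Or.inl h4
    · intro _; omega
  · constructor
    · intro h; exact absurd h (by omega)
    · rintro (h | h)
      · exact absurd h h4
      · exact absurd h.1 h3

/-- "y is at least `2^s` above x" in the lexicographic sense. -/
def GeM (s : ℕ) (x y : A ×ₗ ℤ) : Prop :=
  ((ofLex x).1 = (ofLex y).1 ∧ (ofLex x).2 + 2 ^ s ≤ (ofLex y).2) ∨ (ofLex x).1 < (ofLex y).1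

lemma trunc_eq_pow_iff (s : ℕ) (x y : A ×ₗ ℤ) : trunc s x y = 2 ^ s ↔ GeM s x y := by
  have h1 := two_pow_pos s
  unfold trunc GeM
  split_ifs with h3 h4
  · constructor
    · intro h; left; exact ⟨h3, by omega⟩
    · rintro (h | h)
      · omega
      · exact absurd h (le_of_eq h3.symm).not_gt
  · constructor
    · intro _; exact Or.inr h4
    · intro _; rfl
  · constructor
    · intro h; exact absurd h (by omega)
    · rintro (h | h)
      · exact absurd h.1 h3
      · exact absurd h h4

lemma trunc_eq_neg_pow_iff (s : ℕ) (x y : A ×ₗ ℤ) :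
    trunc s x y = -(2 ^ s : ℤ) ↔ GeM s y x := by
  rw [trunc_neg s y x, neg_inj, trunc_eq_pow_iff]

lemma trunc_bounds (s : ℕ) (x y : A ×ₗ ℤ) :
    -(2 ^ s : ℤ) ≤ trunc s x y ∧ trunc s x y ≤ 2 ^ s := by
  have h1 := two_pow_pos s
  unfold trunc
  split_ifs <;> omega

lemma trunc_of_abs_lt {s : ℕ} {x y : A ×ₗ ℤ}
    (h1 : -(2 ^ s : ℤ) < trunc s x y) (h2 : trunc s x y < 2 ^ s) :
    (ofLex x).1 = (ofLex y).1 ∧ (ofLex y).2 - (ofLex x).2 = trunc s x y := by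
  have hp := two_pow_pos s
  unfold trunc at h1 h2 ⊢
  split_ifs at h1 h2 ⊢ with h3 h4
  · exact ⟨h3, by omega⟩
  · exact absurd h2 (lt_irrefl _)
  · exact absurd h1 (lt_irrefl _)

lemma GeM.shift_up {r : ℕ} {x y x' : A ×ₗ ℤ} (h : GeM (r + 1) x y)
    (hb : (ofLex x').1 = (ofLex x).1) (hz : (ofLex x').2 ≤ (ofLex x).2 + 2 ^ r) :
    GeM r x' y := by
  have : (2 : ℤ) ^ (r + 1) = 2 ^ r + 2 ^ r := by ring
  rcases h with ⟨h1, h2⟩ | h1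
  · exact Or.inl ⟨hb.trans h1, by omega⟩
  · exact Or.inr (hb ▸ h1)

lemma GeM.shift_down {r : ℕ} {x y x' : A ×ₗ ℤ} (h : GeM (r + 1) y x)
    (hb : (ofLex x').1 = (ofLex x).1) (hz : (ofLex x).2 - 2 ^ r ≤ (ofLex x').2) :
    GeM r y x' := by
  have : (2 : ℤ) ^ (r + 1) = 2 ^ r + 2 ^ r := by ring
  rcases h with ⟨h1, h2⟩ | h1
  · exact Or.inl ⟨h1.trans hb.symm, by omega⟩
  · exact Or.inr (hb ▸ h1)

/-- Configuration equivalence of two tuples at rank `r`. -/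
def Econf (r : ℕ) {ι : Type*} (a : ι → A ×ₗ ℤ) (b : ι → B ×ₗ ℤ) : Prop :=
  ∀ i j, trunc r (a i) (a j) = trunc r (b i) (b j)

lemma Econf.symm {r : ℕ} {ι : Type*} {a : ι → A ×ₗ ℤ} {b : ι → B ×ₗ ℤ}
    (h : Econf r a b) : Econf r b a := fun i j => (h i j).symm

lemma Econf.mono {r s : ℕ} (hrs : r ≤ s) {ι : Type*} {a : ι → A ×ₗ ℤ} {b : ι → B ×ₗ ℤ}
    (h : Econf s a b) : Econf r a b := fun i j => trunc_eq_of_le hrs (h i j)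

lemma lex_lt_iff (x y : A ×ₗ ℤ) :
    x < y ↔ (ofLex x).1 < (ofLex y).1 ∨
      ((ofLex x).1 = (ofLex y).1 ∧ (ofLex x).2 < (ofLex y).2) :=
  Prod.Lex.lt_iff

lemma trunc_block {x y : A ×ₗ ℤ} (r : ℕ) (hb : (ofLex x).1 = (ofLex y).1) :
    trunc r x y = max (-(2 ^ r : ℤ)) (min ((2 : ℤ) ^ r) ((ofLex y).2 - (ofLex x).2)) := by
  unfold trunc; rw [if_pos hb]

/-- From `x ≤ y`, either same block with `≤` on offsets, or smaller block. -/
lemma lex_le_cases {x y : A ×ₗ ℤ} (h : x ≤ y) :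
    ((ofLex x).1 = (ofLex y).1 ∧ (ofLex x).2 ≤ (ofLex y).2) ∨ (ofLex x).1 < (ofLex y).1 := by
  rcases (lex_le_iff x y).mp h with h1 | h1
  · exact Or.inr h1
  · exact Or.inl h1

/-- The key extension (back-and-forth) lemma. -/
lemma extension {ι : Type*} [Fintype ι] [Nonempty B] {r : ℕ}
    {a : ι → A ×ₗ ℤ} {b : ι → B ×ₗ ℤ} (h : Econf (r + 1) a b) (c : A ×ₗ ℤ) :
    ∃ d : B ×ₗ ℤ, ∀ j, trunc r c (a j) = trunc r d (b j) := by
  have _ : Nonempty (B ×ₗ ℤ) := ⟨toLex (Classical.arbitrary B, 0)⟩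
  have hp : (0 : ℤ) < 2 ^ r := two_pow_pos r
  have hp2 : (2 : ℤ) ^ (r + 1) = 2 ^ r + 2 ^ r := by ring
  by_cases hcase : ∃ i, (ofLex (a i)).1 = (ofLex c).1 ∧
      |(ofLex c).2 - (ofLex (a i)).2| < 2 ^ r
  · -- c is close to some element of the tuple
    obtain ⟨i, hbi, hei⟩ := hcase
    rw [abs_lt] at hei
    refine ⟨toLex ((ofLex (b i)).1, (ofLex (b i)).2 + ((ofLex c).2 - (ofLex (a i)).2)), ?_⟩
    intro j
    set d : B ×ₗ ℤ := toLex ((ofLex (b i)).1, (ofLex (b i)).2 + ((ofLex c).2 - (ofLex (a i)).2))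
      with hd
    have hdb : (ofLex d).1 = (ofLex (b i)).1 := rfl
    have hdz : (ofLex d).2 = (ofLex (b i)).2 + ((ofLex c).2 - (ofLex (a i)).2) := rfl
    have hj := h i j
    have hbnd := trunc_bounds (r + 1) (a i) (a j)
    rcases lt_trichotomy (trunc (r + 1) (a i) (a j)) (2 ^ (r + 1)) with hvlt | hveq | hvgt
    · rcases lt_trichotomy (-(2 ^ (r + 1) : ℤ)) (trunc (r + 1) (a i) (a j)) with hwlt | hweq | hwgt
      · -- |v| < 2^(r+1) : exact transfer
        obtain ⟨hba, hda⟩ := trunc_of_abs_lt hwlt hvlt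
        obtain ⟨hbb, hdb2⟩ := trunc_of_abs_lt (hj ▸ hwlt) (hj ▸ hvlt)
        rw [trunc_block r (hbi.symm.trans hba), trunc_block r (hdb.trans hbb)]
        omega
      · -- v = -2^(r+1)
        have ga : GeM (r + 1) (a j) (a i) := (trunc_eq_neg_pow_iff _ _ _).mp hweq.symm
        have gb : GeM (r + 1) (b j) (b i) := (trunc_eq_neg_pow_iff _ _ _).mp (hj ▸ hweq.symm)
        have gc : GeM r (a j) c := ga.shift_down hbi.symm (by omega)
        have gd : GeM r (b j) d := gb.shift_down hdb.symm (by omega)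
        rw [(trunc_eq_neg_pow_iff r c (a j)).mpr gc, (trunc_eq_neg_pow_iff r d (b j)).mpr gd]
      · omega
    · -- v = 2^(r+1)
      have ga : GeM (r + 1) (a i) (a j) := (trunc_eq_pow_iff _ _ _).mp hveq
      have gb : GeM (r + 1) (b i) (b j) := (trunc_eq_pow_iff _ _ _).mp (hj ▸ hveq)
      have gc : GeM r c (a j) := ga.shift_up hbi.symm (by omega)
      have gd : GeM r d (b j) := gb.shift_up hdb (by omega)
      rw [(trunc_eq_pow_iff r c (a j)).mpr gc, (trunc_eq_pow_iff r d (b j)).mpr gd]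
    · omega
  · -- c is far from every element of the tuple
    push_neg at hcase
    have hne : ∀ j, a j ≠ c := by
      intro j hj
      have h1 := hcase j (by rw [hj])
      rw [hj] at h1
      simp at h1
      omega
    have claimT : ∀ j, c < a j → GeM r c (a j) := by
      intro j hj
      rcases (lex_lt_iff c (a j)).mp hj with h1 | ⟨h1, h2⟩
      · exact Or.inr h1
      · have h3 := hcase j h1.symm
        rw [le_abs] at h3
        exact Or.inl ⟨h1, by omega⟩
    have claimS : ∀ j, a j < c → GeM r (a j) c := by
      intro j hj
      rcases (lex_lt_iff (a j) c).mp hj with h1 | ⟨h1, h2⟩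
      · exact Or.inr h1
      · have h3 := hcase j h1
        rw [le_abs] at h3
        exact Or.inl ⟨h1, by omega⟩
    by_cases hS : ∃ j, a j < c
    · obtain ⟨jw, hjw⟩ := hS
      have hSne : (Finset.univ.filter (fun j => a j < c)).Nonempty :=
        ⟨jw, Finset.mem_filter.mpr ⟨Finset.mem_univ _, hjw⟩⟩
      obtain ⟨j0, hj0S, hj0max⟩ := (Finset.univ.filter (fun j => a j < c)).exists_max_image b hSne
      have hj0 : a j0 < c := (Finset.mem_filter.mp hj0S).2
      refine ⟨toLex ((ofLex (b j0)).1, (ofLex (b j0)).2 + 2 ^ r), ?_⟩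
      intro j
      set d : B ×ₗ ℤ := toLex ((ofLex (b j0)).1, (ofLex (b j0)).2 + 2 ^ r) with hd
      have hdb : (ofLex d).1 = (ofLex (b j0)).1 := rfl
      have hdz : (ofLex d).2 = (ofLex (b j0)).2 + 2 ^ r := rfl
      rcases lt_trichotomy (a j) c with hlt | heq | hgt
      · -- j below c
        have hble : b j ≤ b j0 := hj0max j (Finset.mem_filter.mpr ⟨Finset.mem_univ _, hlt⟩)
        have gd : GeM r (b j) d := by
          rcases lex_le_cases hble with ⟨h1, h2⟩ | h1
          · exact Or.inl ⟨h1.trans hdb.symm, by omega⟩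
          · exact Or.inr (by rw [hdb]; exact h1)
        rw [(trunc_eq_neg_pow_iff r c (a j)).mpr (claimS j hlt),
          (trunc_eq_neg_pow_iff r d (b j)).mpr gd]
      · exact absurd heq (hne j)
      · -- j above c
        have ga : GeM (r + 1) (a j0) (a j) := by
          by_cases hbb : (ofLex (a j0)).1 = (ofLex (a j)).1
          · left
            refine ⟨hbb, ?_⟩
            rcases claimS j0 hj0 with ⟨hb0, hz0⟩ | hb0
            · rcases claimT j hgt with ⟨hb1, hz1⟩ | hb1
              · omega
              · exact absurd (hb0 ▸ hb1) (hbb ▸ lt_irrefl _)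
            · rcases claimT j hgt with ⟨hb1, hz1⟩ | hb1
              · exact absurd (hb1 ▸ hb0) (hbb ▸ lt_irrefl _)
              · exact absurd (hb0.trans hb1) (hbb ▸ lt_irrefl _)
          · right
            rcases (lex_lt_iff (a j0) (a j)).mp (hj0.trans hgt) with h1 | ⟨h1, _⟩
            · exact h1
            · exact absurd h1 hbb
        have gb : GeM (r + 1) (b j0) (b j) :=
          (trunc_eq_pow_iff _ _ _).mp ((h j0 j) ▸ (trunc_eq_pow_iff _ _ _).mpr ga)
        have gd : GeM r d (b j) := gb.shift_up hdb (by omega)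
        rw [(trunc_eq_pow_iff r c (a j)).mpr (claimT j hgt),
          (trunc_eq_pow_iff r d (b j)).mpr gd]
    · by_cases hι : Nonempty ι
      · have huniv : (Finset.univ : Finset ι).Nonempty := Finset.univ_nonempty
        obtain ⟨j1, _, hj1min⟩ := (Finset.univ : Finset ι).exists_min_image b huniv
        have hall : ∀ j, c < a j := by
          intro j
          rcases lt_trichotomy (a j) c with h1 | h1 | h1
          · exact absurd ⟨j, h1⟩ hS
          · exact absurd h1 (hne j)
          · exact h1
        refine ⟨toLex ((ofLex (b j1)).1, (ofLex (b j1)).2 - 2 ^ r), ?_⟩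
        intro j
        set d : B ×ₗ ℤ := toLex ((ofLex (b j1)).1, (ofLex (b j1)).2 - 2 ^ r) with hd
        have hdb : (ofLex d).1 = (ofLex (b j1)).1 := rfl
        have hdz : (ofLex d).2 = (ofLex (b j1)).2 - 2 ^ r := rfl
        have hble : b j1 ≤ b j := hj1min j (Finset.mem_univ _)
        have gd : GeM r d (b j) := by
          rcases lex_le_cases hble with ⟨h1, h2⟩ | h1
          · exact Or.inl ⟨hdb.trans h1, by omega⟩
          · exact Or.inr (by rw [hdb]; exact h1)
        rw [(trunc_eq_pow_iff r c (a j)).mpr (claimT j (hall j)),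
          (trunc_eq_pow_iff r d (b j)).mpr gd]
      · exact ⟨Classical.arbitrary _, fun j => absurd ⟨j⟩ hι⟩

/-- Quantifier depth of a bounded formula. -/
def qd {L : Language} {α : Type*} : ∀ {m : ℕ}, L.BoundedFormula α m → ℕ
  | _, BoundedFormula.falsum => 0
  | _, BoundedFormula.equal _ _ => 0
  | _, BoundedFormula.rel _ _ => 0
  | _, BoundedFormula.imp f g => max (qd f) (qd g)
  | _, BoundedFormula.all f => qd f + 1

lemma term_is_var {β : Type*} : ∀ t : Language.order.Term β, ∃ v, t = Language.Term.var v
  | Language.Term.var v => ⟨v, rfl⟩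
  | Language.Term.func f _ => isEmptyElim f

lemma relMap_le_iff {M : Type*} [LinearOrder M] (v : Fin 2 → M) :
    Structure.RelMap (L := Language.order) orderRel.le v ↔ v 0 ≤ v 1 := Iff.rfl

lemma econf_snoc {n m : ℕ} {r : ℕ} {a : Fin n → A ×ₗ ℤ} {xs : Fin m → A ×ₗ ℤ}
    {b : Fin n → B ×ₗ ℤ} {ys : Fin m → B ×ₗ ℤ} {c : A ×ₗ ℤ} {d : B ×ₗ ℤ}
    (h : Econf (r + 1) (Sum.elim a xs) (Sum.elim b ys))
    (hd : ∀ j, trunc r c (Sum.elim a xs j) = trunc r d (Sum.elim b ys j)) :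
    Econf r (Sum.elim a (Fin.snoc xs c)) (Sum.elim b (Fin.snoc ys d)) := by
  have key : ∀ i : Fin n ⊕ Fin (m + 1),
      (∃ i₀, Sum.elim a (Fin.snoc xs c) i = Sum.elim a xs i₀ ∧
        Sum.elim b (Fin.snoc ys d) i = Sum.elim b ys i₀) ∨
      (Sum.elim a (Fin.snoc xs c) i = c ∧ Sum.elim b (Fin.snoc ys d) i = d) := by
    rintro (k | k)
    · exact Or.inl ⟨Sum.inl k, rfl, rfl⟩
    · refine Fin.lastCases ?_ ?_ k
      · exact Or.inr ⟨by simp, by simp⟩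
      · intro k0
        exact Or.inl ⟨Sum.inr k0, by simp, by simp⟩
  intro i j
  rcases key i with ⟨i₀, hi1, hi2⟩ | ⟨hi1, hi2⟩ <;>
    rcases key j with ⟨j₀, hj1, hj2⟩ | ⟨hj1, hj2⟩
  · rw [hi1, hi2, hj1, hj2]
    exact trunc_eq_of_le (Nat.le_succ r) (h i₀ j₀)
  · rw [hi1, hi2, hj1, hj2, trunc_neg r c _, trunc_neg r d _, hd i₀]
  · rw [hi1, hi2, hj1, hj2]
    exact hd j₀
  · rw [hi1, hi2, hj1, hj2, trunc_self, trunc_self]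

lemma realize_iff_of_econf [Nonempty A] [Nonempty B] {n : ℕ} :
    ∀ {m : ℕ} (φ : Language.order.BoundedFormula (Fin n) m) (r : ℕ), qd φ ≤ r →
    ∀ (a : Fin n → A ×ₗ ℤ) (xs : Fin m → A ×ₗ ℤ) (b : Fin n → B ×ₗ ℤ) (ys : Fin m → B ×ₗ ℤ),
      Econf r (Sum.elim a xs) (Sum.elim b ys) →
      (φ.Realize a xs ↔ φ.Realize b ys) := by
  intro m φ
  induction φ with
  | falsum =>
    intro r hr a xs b ys h
    simp [BoundedFormula.Realize]
  | equal t₁ t₂ =>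
    intro r hr a xs b ys h
    obtain ⟨v₁, rfl⟩ := term_is_var t₁
    obtain ⟨v₂, rfl⟩ := term_is_var t₂
    show Sum.elim a xs v₁ = Sum.elim a xs v₂ ↔ Sum.elim b ys v₁ = Sum.elim b ys v₂
    rw [← trunc_eq_zero_iff r, ← trunc_eq_zero_iff r, h v₁ v₂]
  | rel R ts =>
    intro r hr a xs b ys h
    cases R
    obtain ⟨v₁, h1⟩ := term_is_var (ts 0)
    obtain ⟨v₂, h2⟩ := term_is_var (ts 1)
    have hts : ts = ![Language.Term.var v₁, Language.Term.var v₂] := by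
      funext k
      fin_cases k
      · exact h1
      · exact h2
    rw [hts]
    show Sum.elim a xs v₁ ≤ Sum.elim a xs v₂ ↔ Sum.elim b ys v₁ ≤ Sum.elim b ys v₂
    rw [← trunc_nonneg_iff r, ← trunc_nonneg_iff r, h v₁ v₂]
  | imp f g ihf ihg =>
    intro r hr a xs b ys h
    simp only [qd] at hr
    simp only [BoundedFormula.realize_imp]
    rw [ihf r (le_trans (le_max_left _ _) hr) a xs b ys h,
      ihg r (le_trans (le_max_right _ _) hr) a xs b ys h]
  | all f ih =>
    intro r hr a xs b ys h
    simp only [qd] at hr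
    cases r with
    | zero => omega
    | succ r =>
      have hf : qd f ≤ r := by omega
      simp only [BoundedFormula.realize_all]
      constructor
      · intro hx d
        obtain ⟨cc, hcc⟩ := extension (h.symm) d
        have hext := econf_snoc h (fun j => (hcc j).symm)
        exact (ih r hf a _ b _ hext).mp (hx cc)
      · intro hx cc
        obtain ⟨d, hd⟩ := extension h cc
        have hext := econf_snoc h hd
        exact (ih r hf a _ b _ hext).mpr (hx d)

lemma exists_econf_forall [Infinite B] {n : ℕ} (a : Fin n → A ×ₗ ℤ) :
    ∃ b : Fin n → B ×ₗ ℤ, ∀ r, Econf r a b := by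
  haveI : Finite ↥(Set.range fun i => (ofLex (a i)).1) :=
    (Set.finite_range _).to_subtype
  obtain ⟨f⟩ :=
    nonempty_orderEmbedding_of_finite_infinite ↥(Set.range fun i => (ofLex (a i)).1) B
  set p : Fin n → ↥(Set.range fun i => (ofLex (a i)).1) :=
    fun i => ⟨(ofLex (a i)).1, Set.mem_range_self i⟩ with hp
  refine ⟨fun i => toLex (f (p i), (ofLex (a i)).2), fun r i j => ?_⟩
  have hinj : f (p i) = f (p j) ↔ (ofLex (a i)).1 = (ofLex (a j)).1 := by
    rw [f.injective.eq_iff, hp, Subtype.mk_eq_mk]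
  have hlt : f (p i) < f (p j) ↔ (ofLex (a i)).1 < (ofLex (a j)).1 := by
    rw [f.lt_iff_lt, hp, Subtype.mk_lt_mk]
  unfold trunc
  by_cases h1 : (ofLex (a i)).1 = (ofLex (a j)).1
  · rw [if_pos h1, if_pos (show (ofLex (toLex (f (p i), (ofLex (a i)).2))).1 =
      (ofLex (toLex (f (p j), (ofLex (a j)).2))).1 from hinj.mpr h1)]
    rfl
  · rw [if_neg h1, if_neg (show ¬(ofLex (toLex (f (p i), (ofLex (a i)).2))).1 =
      (ofLex (toLex (f (p j), (ofLex (a j)).2))).1 from fun hh => h1 (hinj.mp hh))]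
    by_cases h2 : (ofLex (a i)).1 < (ofLex (a j)).1
    · rw [if_pos h2, if_pos (show (ofLex (toLex (f (p i), (ofLex (a i)).2))).1 <
        (ofLex (toLex (f (p j), (ofLex (a j)).2))).1 from hlt.mpr h2)]
    · rw [if_neg h2, if_neg (show ¬(ofLex (toLex (f (p i), (ofLex (a i)).2))).1 <
        (ofLex (toLex (f (p j), (ofLex (a j)).2))).1 from fun hh => h2 (hlt.mp hh))]

lemma half (A B : Type*) [LinearOrder A] [LinearOrder B] [Infinite A] [Infinite B]
    (n : ℕ) (a : Fin n → A ×ₗ ℤ) :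
    ∃ b : Fin n → B ×ₗ ℤ, ∀ φ : Language.order.Formula (Fin n),
      φ.Realize a ↔ φ.Realize b := by
  obtain ⟨b, hb⟩ := exists_econf_forall (B := B) a
  refine ⟨b, fun φ => ?_⟩
  have h0 : Econf (qd φ) (Sum.elim a (default : Fin 0 → A ×ₗ ℤ))
      (Sum.elim b (default : Fin 0 → B ×ₗ ℤ)) := by
    rintro (i | i) (j | j)
    · exact hb _ i j
    · exact j.elim0
    · exact i.elim0
    · exact i.elim0
  exact realize_iff_of_econf φ (qd φ) le_rfl a default b default h0

end IsotypicAux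

theorem isotypic_lex_prod_int
    (A B : Type*) [LinearOrder A] [LinearOrder B] [Infinite A] [Infinite B] :
    Isotypic Language.order (A ×ₗ ℤ) (B ×ₗ ℤ) := by
  constructor
  · intro n a
    exact IsotypicAux.half A B n a
  · intro n b
    obtain ⟨a, ha⟩ := IsotypicAux.half B A n b
    exact ⟨a, fun φ => (ha φ).symm⟩
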